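/- Let $\pi$ be an invariant probability measure of a Markov chain on state space $\Theta$ with transition kernel $p$, and suppose there is a measurable function $h: \Theta \to \mathbb{R}$ and constants $a, b, c > 0$ such that $\int \mathbb{E}_\theta[u(\theta_1)]\,\pi(d\theta) - \int u(\theta)\,\pi(d\theta) = 0$ and $\mathbb{E}_\theta[u(\theta_1)] - u(\theta) \le -\eta(a\,h(\theta)^2 - b\,h(\theta) - c)$ for all $\theta$, where $\eta > 0$ and $h \ge 0$. Let $r = \frac{b + \sqrt{b^2+4ac}}{2a}$, $\beta > 1$, and $B = \{\theta: h(\theta) \le \beta r\}$. Then $\frac{\pi(B^c)}{\pi(B)} \le \frac{1}{\beta^2 - 1} \cdot \frac{c + b^2/(4a)}{c}$. -/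

import Mathlib

open MeasureTheory ProbabilityTheory

/-- Concentration of an invariant distribution: under the quadratic drift bound and
stationarity, `π(Bᶜ)/π(B) ≤ (1/(β²-1)) · (c + b²/(4a))/c` where
`B = {θ : h(θ) ≤ β r}` and `r` is the positive root of `a r² - b r - c = 0`. -/
theorem stmt11 {S : Type*} [MeasurableSpace S]
    (κ : ProbabilityTheory.Kernel S S) [ProbabilityTheory.IsMarkovKernel κ]
    (π : Measure S) [IsProbabilityMeasure π]
    (u : S → ℝ) (humeas : Measurable u) (hubd : ∃ M, ∀ θ, |u θ| ≤ M)
    (h : S → ℝ) (hhmeas : Measurable h) (hh0 : ∀ θ, 0 ≤ h θ)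
    (a b c η : ℝ) (ha : 0 < a) (hb : 0 < b) (hc : 0 < c) (hη : 0 < η)
    (hinv : (∫ θ, (∫ θ₁, u θ₁ ∂ κ θ) ∂π) - (∫ θ, u θ ∂π) = 0)
    (hdrift : ∀ θ, (∫ θ₁, u θ₁ ∂ κ θ) - u θ ≤ -η * (a * h θ ^ 2 - b * h θ - c))
    (r : ℝ) (hr : r = (b + Real.sqrt (b ^ 2 + 4 * a * c)) / (2 * a))
    (β : ℝ) (hβ : 1 < β)
    (B : Set S) (hB : B = {θ | h θ ≤ β * r}) (hπB : 0 < π B) :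
    (π Bᶜ).toReal / (π B).toReal ≤ (1 / (β ^ 2 - 1)) * ((c + b ^ 2 / (4 * a)) / c) := by
  obtain ⟨M, hM⟩ := hubd
  -- basic positivity facts about r
  have hs2 : Real.sqrt (b ^ 2 + 4 * a * c) ^ 2 = b ^ 2 + 4 * a * c :=
    Real.sq_sqrt (by positivity)
  have hsb : b < Real.sqrt (b ^ 2 + 4 * a * c) := by
    nlinarith [Real.sqrt_nonneg (b ^ 2 + 4 * a * c)]
  have hroot : a * r ^ 2 - b * r - c = 0 := by
    rw [hr]; field_simp; rw [show b ^ 2 + a * 4 * c = b ^ 2 + 4 * a * c by ring]; nlinarith [hs2]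
  have hr0 : 0 < r := by rw [hr]; positivity
  have har : b < a * r := by
    have e : a * r = (b + Real.sqrt (b ^ 2 + 4 * a * c)) / 2 := by
      rw [hr]; field_simp
    rw [e]; linarith
  -- measurability of the expected value
  have hEu : Measurable fun θ => ∫ θ₁, u θ₁ ∂ κ θ := by
    have : StronglyMeasurable fun p : S × S => u p.2 :=
      (humeas.comp measurable_snd).stronglyMeasurable
    exact this.integral_kernel_prod_right'.measurable
  have hEuM : ∀ θ, |∫ θ₁, u θ₁ ∂ κ θ| ≤ M := by
    intro θ
    have := norm_integral_le_of_norm_le_const (μ := κ θ) (f := u) (C := M)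
      (Filter.Eventually.of_forall fun θ₁ => by rw [Real.norm_eq_abs]; exact hM θ₁)
    simpa using this
  set g : S → ℝ := fun θ => a * h θ ^ 2 - b * h θ - c with hgdef
  have hgmeas : Measurable g := by
    apply Measurable.sub
    apply Measurable.sub
    · exact (measurable_const.mul (hhmeas.pow measurable_const))
    · exact measurable_const.mul hhmeas
    · exact measurable_const
  -- pointwise bounds on g
  have hglb : ∀ θ, -(c + b ^ 2 / (4 * a)) ≤ g θ := by
    intro θ
    have e : b ^ 2 / (4 * a) * (4 * a) = b ^ 2 := div_mul_cancel₀ _ (by positivity)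
    show -(c + b ^ 2 / (4 * a)) ≤ a * h θ ^ 2 - b * h θ - c
    nlinarith [sq_nonneg (2 * a * h θ - b), e, ha]
  have hgub : ∀ θ, g θ ≤ 2 * M / η := by
    intro θ
    have h1 := hdrift θ
    have h2 := hM θ
    have h3 := hEuM θ
    rw [abs_le] at h2 h3
    have key : η * (a * h θ ^ 2 - b * h θ - c) ≤ 2 * M := by nlinarith
    show a * h θ ^ 2 - b * h θ - c ≤ 2 * M / η
    rw [le_div_iff₀ hη]; nlinarith
  have hgint : Integrable g π := by
    refine Integrable.mono' (integrable_const (max (2 * M / η) (c + b ^ 2 / (4 * a))))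
      hgmeas.aestronglyMeasurable (Filter.Eventually.of_forall fun θ => ?_)
    rw [Real.norm_eq_abs, abs_le]
    constructor
    · exact le_trans (neg_le_neg (le_max_right _ _)) (hglb θ)
    · exact le_trans (hgub θ) (le_max_left _ _)
  -- integral of g is ≤ 0
  have hEuint : Integrable (fun θ => ∫ θ₁, u θ₁ ∂ κ θ) π := by
    refine Integrable.mono' (integrable_const M) hEu.aestronglyMeasurable
      (Filter.Eventually.of_forall fun θ => ?_)
    exact hEuM θ
  have huint : Integrable u π := by
    refine Integrable.mono' (integrable_const M) humeas.aestronglyMeasurable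
      (Filter.Eventually.of_forall fun θ => hM θ)
  have hintg : ∫ θ, g θ ∂π ≤ 0 := by
    have h1 : ∀ θ, η * g θ ≤ u θ - ∫ θ₁, u θ₁ ∂ κ θ := by
      intro θ; have := hdrift θ
      show η * (a * h θ ^ 2 - b * h θ - c) ≤ _
      linarith
    have h2 : ∫ θ, η * g θ ∂π ≤ ∫ θ, (u θ - ∫ θ₁, u θ₁ ∂ κ θ) ∂π :=
      integral_mono (hgint.const_mul η) (huint.sub hEuint) h1
    rw [integral_const_mul, integral_sub huint hEuint] at h2
    nlinarith
  -- set B is measurable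
  have hMB : MeasurableSet B := by
    rw [hB]; exact measurableSet_le hhmeas measurable_const
  -- lower bound on the integral over B
  have hIB : -(c + b ^ 2 / (4 * a)) * (π B).toReal ≤ ∫ θ in B, g θ ∂π := by
    have := setIntegral_mono_on (integrableOn_const (measure_lt_top π B).ne)
      hgint.integrableOn hMB (fun θ _ => hglb θ)
    rwa [setIntegral_const, smul_eq_mul, mul_comm] at this
  -- lower bound on the integral over Bᶜ
  have hIBc : (β ^ 2 - 1) * c * (π Bᶜ).toReal ≤ ∫ θ in Bᶜ, g θ ∂π := by
    have key : ∀ θ ∈ Bᶜ, (β ^ 2 - 1) * c ≤ g θ := by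
      intro θ hθ
      rw [hB] at hθ
      have ht : β * r < h θ := by simpa using hθ
      have h1 : 0 ≤ (h θ - β * r) * (a * (h θ + β * r) - b) := by
        apply mul_nonneg (by linarith)
        nlinarith
      show (β ^ 2 - 1) * c ≤ a * h θ ^ 2 - b * h θ - c
      nlinarith [h1, hroot, mul_nonneg (mul_nonneg (mul_nonneg hb.le (by linarith : (0:ℝ) ≤ β)) hr0.le) (by linarith : (0:ℝ) ≤ β - 1)]
    have := setIntegral_mono_on (integrableOn_const (measure_lt_top π Bᶜ).ne)
      hgint.integrableOn hMB.compl key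
    rwa [setIntegral_const, smul_eq_mul, mul_comm] at this
  have hsplit : (∫ θ in B, g θ ∂π) + ∫ θ in Bᶜ, g θ ∂π = ∫ θ, g θ ∂π :=
    integral_add_compl hMB hgint
  -- main inequality
  have hπB' : 0 < (π B).toReal :=
    ENNReal.toReal_pos hπB.ne' (measure_lt_top π B).ne
  have hβ2 : 0 < β ^ 2 - 1 := by nlinarith
  have main : (π Bᶜ).toReal * ((β ^ 2 - 1) * c) ≤ (c + b ^ 2 / (4 * a)) * (π B).toReal := by
    linarith [hIB, hIBc, hsplit, hintg]
  calc (π Bᶜ).toReal / (π B).toReal ≤ (c + b ^ 2 / (4 * a)) / ((β ^ 2 - 1) * c) := by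
        rw [div_le_div_iff₀ hπB' (by positivity)]; linarith
    _ = (1 / (β ^ 2 - 1)) * ((c + b ^ 2 / (4 * a)) / c) := by
        rw [div_mul_div_comm, one_mul]
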